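/- Suppose M contains an element with zero annihilator and N is a proper submodule of M containing every torsion element of M (i.e., every m ∈ M with Ann_R(m) ≠ 0 lies in N). Then N is a weakly classical 1-absorbing prime submodule of M if and only if (N :_R m) is a weakly 1-absorbing prime ideal of R for every m ∈ M \ N. -/
import Mathlib


/-- A proper submodule `N` of `M` is weakly classical 1-absorbing prime if whenever
`abcm ∈ N` and `abcm ≠ 0` for nonunits `a, b, c ∈ R` and `m ∈ M`, then `abm ∈ N` or `cm ∈ N`. -/
def IsWeaklyClassical1AbsorbingPrime {R : Type*} [CommRing R] {M : Type*} [AddCommGroup M]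
    [Module R M] (N : Submodule R M) : Prop :=
  N ≠ ⊤ ∧ ∀ a b c : R, ∀ m : M, ¬ IsUnit a → ¬ IsUnit b → ¬ IsUnit c →
    (a * b * c) • m ∈ N → (a * b * c) • m ≠ 0 → ((a * b) • m ∈ N ∨ c • m ∈ N)

/-- A proper ideal `I` of `R` is weakly 1-absorbing prime if whenever `abc ∈ I` and
`abc ≠ 0` for nonunits `a, b, c ∈ R`, then `ab ∈ I` or `c ∈ I`. -/
def IsWeakly1AbsorbingPrimeIdeal {R : Type*} [CommRing R] (I : Ideal R) : Prop :=
  I ≠ ⊤ ∧ ∀ a b c : R, ¬ IsUnit a → ¬ IsUnit b → ¬ IsUnit c →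
    a * b * c ∈ I → a * b * c ≠ 0 → (a * b ∈ I ∨ c ∈ I)

/-- If `M` has an element with zero annihilator and every torsion element of
`M` lies in the proper submodule `N`, then `N` is weakly classical 1-absorbing prime iff
`(N :_R m)` is a weakly 1-absorbing prime ideal for every `m ∈ M \ N`. -/
theorem stmt_1 {R : Type*} [CommRing R] [Nontrivial R] {M : Type*} [AddCommGroup M]
    [Module R M] [Nontrivial M] (N : Submodule R M) (hN : N ≠ ⊤)
    (hnt : ∃ m : M, ∀ x : R, x • m = 0 → x = 0)
    (htor : ∀ m : M, (∃ x : R, x ≠ 0 ∧ x • m = 0) → m ∈ N) :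
    IsWeaklyClassical1AbsorbingPrime N ↔
      ∀ m : M, m ∉ N →
        IsWeakly1AbsorbingPrimeIdeal (Submodule.comap (LinearMap.toSpanSingleton R M m) N) := by

  constructor
  · rintro ⟨-, hmain⟩ m hm
    constructor
    · intro h
      have h1 : (1:R) ∈ Submodule.comap (LinearMap.toSpanSingleton R M m) N := h ▸ Submodule.mem_top
      exact hm (by simpa [LinearMap.toSpanSingleton_apply] using h1)
    · intro a b c ha hb hc habc hne
      have hmem : (a * b * c) • m ∈ N := by
        simpa [LinearMap.toSpanSingleton_apply] using habc
      have hsne : (a * b * c) • m ≠ 0 := by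
        intro h0
        exact hm (htor m ⟨a * b * c, hne, h0⟩)
      rcases hmain a b c m ha hb hc hmem hsne with h | h
      · exact Or.inl (by simpa [LinearMap.toSpanSingleton_apply] using h)
      · exact Or.inr (by simpa [LinearMap.toSpanSingleton_apply] using h)
  · intro h
    refine ⟨hN, fun a b c m ha hb hc hmem hne => ?_⟩
    by_cases hm : m ∈ N
    · exact Or.inl (Submodule.smul_mem N _ hm)
    · have hI := (h m hm).2 a b c ha hb hc
        (by simpa [LinearMap.toSpanSingleton_apply] using hmem)
        (fun h0 => hne (by simp [h0]))
      rcases hI with h' | h'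
      · exact Or.inl (by simpa [LinearMap.toSpanSingleton_apply] using h')
      · exact Or.inr (by simpa [LinearMap.toSpanSingleton_apply] using h')
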